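/- Let X be any finite set of points in (P^1)^k with defining ideal I_X. Then for any i ∈ N^k and any l ∈ {1,...,k}, dim_k(R_{e_l}·(I_X)_i) = 2·dim_k(I_X)_i − dim_k(I_X)_{i - e_l}, where dim_k(I_X)_{i - e_l} = 0 if i - e_l ∉ N^k. -/

import Mathlib

open MvPolynomial

namespace MultiProjPoints

/-- The variable set of the multigraded coordinate ring of
`ℙ^{n 0} × ⋯ × ℙ^{n (k-1)}`: variables `x_{i,j}` with `i : Fin k`, `0 ≤ j ≤ n i`. -/
abbrev Var (k : ℕ) (n : Fin k → ℕ) := Σ i : Fin k, Fin (n i + 1)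

/-- The `ℕ^k`-grading weight: `deg x_{i,j} = e_i`. -/
def wt (k : ℕ) (n : Fin k → ℕ) : Var k n → (Fin k → ℕ) := fun v => Pi.single v.1 1

/-- The `i`-th standard basis vector of `ℕ^k`. -/
def e {k : ℕ} (l : Fin k) : Fin k → ℕ := Pi.single l 1

variable (K : Type) [Field K]

/-- The graded piece `R_d` of the `ℕ^k`-graded polynomial ring. -/
noncomputable def piece (k : ℕ) (n : Fin k → ℕ) (d : Fin k → ℕ) :
    Submodule K (MvPolynomial (Var k n) K) :=
  weightedHomogeneousSubmodule K (wt k n) d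

/-- `N(d) = ∏ binom (n i + d i) (d i)`, the dimension of `R_d`. -/
def NN (k : ℕ) (n : Fin k → ℕ) (d : Fin k → ℕ) : ℕ := ∏ i, (n i + d i).choose (d i)

/-- A (representative of a) point of `ℙ^{n 0} × ⋯ × ℙ^{n (k-1)}`. -/
def PointRep (k : ℕ) (n : Fin k → ℕ) := (i : Fin k) → Fin (n i + 1) → K

/-- A valid representative: every coordinate block is nonzero. -/
def IsRep {k : ℕ} {n : Fin k → ℕ} (P : PointRep K k n) : Prop := ∀ i, P i ≠ 0

/-- Two representatives define the same point of multi-projective space. -/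
def ProjEq {k : ℕ} {n : Fin k → ℕ} (P Q : PointRep K k n) : Prop :=
  ∀ i, ∃ c : K, c ≠ 0 ∧ P i = c • Q i

/-- A tuple of representatives giving `s` distinct points. -/
def SPoints {k : ℕ} {n : Fin k → ℕ} {s : ℕ} (P : Fin s → PointRep K k n) : Prop :=
  (∀ a, IsRep K (P a)) ∧ ∀ a b, a ≠ b → ¬ ProjEq K (P a) (P b)

/-- The defining ideal `I_X` of the set of points: all polynomials vanishing on
the multi-cone over the points, i.e. the intersection of the point ideals. -/
noncomputable def idealOfPoints {k : ℕ} {n : Fin k → ℕ} {s : ℕ}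
    (P : Fin s → PointRep K k n) : Ideal (MvPolynomial (Var k n) K) :=
  ⨅ (a : Fin s), ⨅ (c : Fin k → K),
    RingHom.ker (eval (fun v : Var k n => c v.1 * P a v.1 v.2))

/-- The degree-`d` piece `I_d` of an ideal, as a `K`-subspace. -/
noncomputable def idealPiece {k : ℕ} {n : Fin k → ℕ}
    (I : Ideal (MvPolynomial (Var k n) K)) (d : Fin k → ℕ) :
    Submodule K (MvPolynomial (Var k n) K) :=
  (Submodule.restrictScalars K I) ⊓ piece K k n d

/-- The multigraded Hilbert function of `X`:
`H_X(d) = dim (R/I_X)_d = dim R_d - dim (I_X)_d`. -/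
noncomputable def hilbert {k : ℕ} {n : Fin k → ℕ} {s : ℕ}
    (P : Fin s → PointRep K k n) (d : Fin k → ℕ) : ℕ :=
  NN k n d - Module.finrank K (idealPiece K (idealOfPoints K P) d)

/-- Generic position: `s` distinct points whose Hilbert function is maximal. -/
def GenericPosition {k : ℕ} {n : Fin k → ℕ} {s : ℕ} (P : Fin s → PointRep K k n) : Prop :=
  SPoints K P ∧ ∀ d : Fin k → ℕ, hilbert K P d = min (NN k n d) s

/-- `R_{e_l}·V`: the span of all products of a variable of degree `e_l`
with an element of `V`. -/
noncomputable def mulSpan {k : ℕ} {n : Fin k → ℕ} (l : Fin k)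
    (V : Submodule K (MvPolynomial (Var k n) K)) :
    Submodule K (MvPolynomial (Var k n) K) :=
  Submodule.span K {g | ∃ (m : Fin (n l + 1)) (f : MvPolynomial (Var k n) K),
    f ∈ V ∧ g = X (⟨l, m⟩ : Var k n) * f}

/-- `D = min { i ∈ ℕ^k | N(i) > s }` (minimal elements for the componentwise order). -/
def Dset (k : ℕ) (n : Fin k → ℕ) (s : ℕ) : Set (Fin k → ℕ) :=
  {i | s < NN k n i ∧ ∀ j : Fin k → ℕ, s < NN k n j → j ≤ i → j = i}

/-- The irrelevant maximal ideal of `R`, generated by all the variables. -/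
noncomputable def irrelevant (k : ℕ) (n : Fin k → ℕ) : Ideal (MvPolynomial (Var k n) K) :=
  Ideal.span (Set.range (X : Var k n → MvPolynomial (Var k n) K))


section Helpers

lemma prime_X_mv {σ : Type*} (K : Type) [Field K] (v : σ) :
    Prime (MvPolynomial.X v : MvPolynomial σ K) := by
  classical
  let E := (renameEquiv K (Equiv.optionSubtypeNe v).symm).trans
    (optionEquivLeft K {b : σ // b ≠ v})
  rw [← MulEquiv.prime_iff E.toRingEquiv.toMulEquiv]
  have h1 : (Equiv.optionSubtypeNe v).symm v = none := by
    rw [Equiv.symm_apply_eq]; simp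
  have hE : E (X v) = Polynomial.X := by
    simp only [E, AlgEquiv.trans_apply, renameEquiv_apply, rename_X, h1,
      optionEquivLeft_X_none]
  show Prime (E (X v))
  rw [hE]
  exact Polynomial.prime_X

lemma split_lemma {σ : Type*} (K : Type) [Field K] {v0 v1 : σ} (hne : v0 ≠ v1)
    {f g : MvPolynomial σ K} (hfg : X v0 * f + X v1 * g = 0) :
    ∃ h, f = X v1 * h ∧ g = -(X v0 * h) := by
  classical
  have hdvd : (X v1 : MvPolynomial σ K) ∣ X v0 * f := ⟨-g, by linear_combination hfg⟩
  have hx : ¬ (X v1 : MvPolynomial σ K) ∣ X v0 := by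
    rw [X_dvd_X]; exact fun h => hne h.symm
  obtain ⟨h, hh⟩ := ((prime_X_mv K v1).2.2 _ _ hdvd).resolve_left hx
  refine ⟨h, hh, ?_⟩
  have h2 : X v1 * g = X v1 * (-(X v0 * h)) := by
    linear_combination hfg - (X v0 : MvPolynomial σ K) * hh
  exact mul_left_cancel₀ (X_ne_zero v1) h2

variable {K : Type} [Field K]

lemma weight_coord {k : ℕ} {n : Fin k → ℕ} (m : Var k n →₀ ℕ) (l : Fin k) :
    Finsupp.weight (wt k n) m l = ∑ v ∈ m.support, m v * wt k n v l := by
  classical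
  rw [Finsupp.weight_apply, Finsupp.sum, Finset.sum_apply]
  simp [smul_eq_mul]

lemma weight_single_e {k : ℕ} {n : Fin k → ℕ} (l : Fin k) (j : Fin (n l + 1)) :
    Finsupp.weight (wt k n) (Finsupp.single (⟨l, j⟩ : Var k n) 1) = e l := by
  classical
  funext l'
  rw [weight_coord, Finsupp.support_single_ne_zero _ one_ne_zero]
  simp [wt, e]

lemma hom_div {k : ℕ} {n : Fin k → ℕ} {l : Fin k} {j : Fin (n l + 1)}
    {h : MvPolynomial (Var k n) K} {i : Fin k → ℕ}
    (H : IsWeightedHomogeneous (wt k n) (X (⟨l, j⟩ : Var k n) * h) i) :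
    IsWeightedHomogeneous (wt k n) h (i - e l) := by
  intro m hm
  have h2 : coeff (Finsupp.single (⟨l, j⟩ : Var k n) 1 + m)
      (X (⟨l, j⟩ : Var k n) * h) ≠ 0 := by rwa [coeff_X_mul]
  have h3 := H h2
  rw [map_add, weight_single_e] at h3
  funext l'
  have h4 := congrFun h3 l'
  simp only [Pi.add_apply, Pi.sub_apply] at h4 ⊢
  omega

lemma hom_mul_X {k : ℕ} {n : Fin k → ℕ} {l : Fin k} (j : Fin (n l + 1))
    {h : MvPolynomial (Var k n) K} {i : Fin k → ℕ} (hil : i l ≠ 0)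
    (H : IsWeightedHomogeneous (wt k n) h (i - e l)) :
    IsWeightedHomogeneous (wt k n) (X (⟨l, j⟩ : Var k n) * h) i := by
  have key : wt k n (⟨l, j⟩ : Var k n) + (i - e l) = i := by
    funext l'
    by_cases hl : l' = l
    · subst hl
      simp only [wt, e, Pi.add_apply, Pi.sub_apply, Pi.single_eq_same]; omega
    · simp only [wt, e, Pi.add_apply, Pi.sub_apply, Pi.single_eq_of_ne hl]; omega
  rw [← key]
  exact (isWeightedHomogeneous_X K (wt k n) _).mul H

lemma mem_ideal_of_X_mul {k s : ℕ} {n : Fin k → ℕ} {P : Fin s → PointRep K k n}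
    (hP : ∀ a, IsRep K (P a)) {l : Fin k} {h : MvPolynomial (Var k n) K}
    {d : Fin k → ℕ} (hh : IsWeightedHomogeneous (wt k n) h d)
    (hx : ∀ jj : Fin (n l + 1), X (⟨l, jj⟩ : Var k n) * h ∈ idealOfPoints K P) :
    h ∈ idealOfPoints K P := by
  classical
  rw [idealOfPoints]
  simp only [Ideal.mem_iInf]
  intro a c
  rw [RingHom.mem_ker]
  obtain ⟨j, hj⟩ : ∃ j, P a l j ≠ 0 := by
    have := hP a l; rwa [Function.ne_iff] at this
  have hev : ∀ c' : Fin k → K,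
      eval (fun v : Var k n => c' v.1 * P a v.1 v.2) (X (⟨l, j⟩ : Var k n) * h)
      = (c' l * P a l j) * eval (fun v : Var k n => c' v.1 * P a v.1 v.2) h := by
    intro c'; rw [map_mul, eval_X]
  have hker : ∀ c' : Fin k → K,
      eval (fun v : Var k n => c' v.1 * P a v.1 v.2) (X (⟨l, j⟩ : Var k n) * h) = 0 := by
    intro c'
    have h0 := hx j
    rw [idealOfPoints] at h0
    simp only [Ideal.mem_iInf] at h0
    exact h0 a c'
  by_cases hc : c l = 0
  · by_cases hd : d l = 0
    · set c' := Function.update c l 1 with hc'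
      have e1 : eval (fun v : Var k n => c' v.1 * P a v.1 v.2) h = 0 := by
        have := hker c'
        rw [hev c'] at this
        have hcl : c' l = 1 := Function.update_self l 1 c
        rcases mul_eq_zero.mp this with h1 | h1
        · exact absurd h1 (by rw [hcl, one_mul]; exact hj)
        · exact h1
      have e2 : eval (fun v : Var k n => c v.1 * P a v.1 v.2) h
          = eval (fun v : Var k n => c' v.1 * P a v.1 v.2) h := by
        rw [eval_eq, eval_eq]
        refine Finset.sum_congr rfl fun m hm => ?_
        congr 1
        refine Finset.prod_congr rfl fun v hv => ?_
        have hvl : v.1 ≠ l := by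
          intro hvl
          have hw := hh (mem_support_iff.mp hm)
          have hwl := congrFun hw l
          rw [weight_coord] at hwl
          rw [hd] at hwl
          have := (Finset.sum_eq_zero_iff.mp hwl) v hv
          have hv1 : wt k n v l = 1 := by simp [wt, Pi.single_apply, hvl]
          rw [hv1, mul_one] at this
          exact (Finsupp.mem_support_iff.mp hv) this
        rw [hc', Function.update_of_ne hvl]
      rw [e2]; exact e1
    · rw [eval_eq]
      refine Finset.sum_eq_zero fun m hm => ?_
      have hw := hh (mem_support_iff.mp hm)
      have hwl := congrFun hw l
      rw [weight_coord] at hwl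
      obtain ⟨v, hv, hvne⟩ : ∃ v ∈ m.support, m v * wt k n v l ≠ 0 := by
        by_contra hcon
        push_neg at hcon
        rw [Finset.sum_eq_zero hcon] at hwl
        exact hd hwl.symm
      have hv1 : v.1 = l := by
        by_contra hne
        exact hvne (by simp [wt, Pi.single_apply, Ne.symm hne])
      apply mul_eq_zero_of_right
      apply Finset.prod_eq_zero hv
      have hc0 : c v.fst = 0 := by rw [hv1]; exact hc
      rw [hc0, zero_mul]
      exact zero_pow (fun h0 => hvne (by rw [h0, zero_mul]))
  · have := hker c
    rw [hev c] at this
    rcases mul_eq_zero.mp this with h1 | h1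
    · exact absurd h1 (mul_ne_zero hc hj)
    · exact h1

lemma piece_le_restrict {k : ℕ} {n : Fin k → ℕ} (d : Fin k → ℕ) :
    piece K k n d ≤ restrictTotalDegree (Var k n) K (∑ l, d l) := by
  classical
  intro f hf
  rw [mem_restrictTotalDegree, totalDegree]
  refine Finset.sup_le fun m hm => ?_
  have hw : Finsupp.weight (wt k n) m = d := hf (mem_support_iff.mp hm)
  have key : (m.sum fun _ e => e) = ∑ l, d l := by
    rw [← hw]
    simp only [weight_coord]
    rw [Finset.sum_comm, Finsupp.sum]
    refine Finset.sum_congr rfl fun v hv => ?_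
    rw [← Finset.mul_sum]
    have : ∑ l : Fin k, wt k n v l = 1 := by
      simp [wt, Finset.sum_pi_single']
    rw [this, mul_one]
  omega

instance fd_piece {k : ℕ} {n : Fin k → ℕ} (d : Fin k → ℕ) :
    FiniteDimensional K (piece K k n d) :=
  Submodule.finiteDimensional_of_le (piece_le_restrict d)

instance fd_idealPiece {k : ℕ} {n : Fin k → ℕ}
    (I : Ideal (MvPolynomial (Var k n) K)) (d : Fin k → ℕ) :
    FiniteDimensional K (idealPiece K I d) :=
  Submodule.finiteDimensional_of_le inf_le_right

end Helpers

theorem dim_mulSpan_P1 (K : Type) [Field K] (k : ℕ) {s : ℕ}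
    (P : Fin s → PointRep K k (fun _ => 1)) (hP : SPoints K P)
    (i : Fin k → ℕ) (l : Fin k) :
    Module.finrank K (mulSpan K l (idealPiece K (idealOfPoints K P) i))
      = 2 * Module.finrank K (idealPiece K (idealOfPoints K P) i)
        - (if i l = 0 then 0
           else Module.finrank K (idealPiece K (idealOfPoints K P) (i - e l))) := by
  classical
  set I := idealOfPoints K P with hIdef
  set V := idealPiece K I i with hVdef
  set x0 : MvPolynomial (Var k fun _ => 1) K := X ⟨l, 0⟩ with hx0
  set x1 : MvPolynomial (Var k fun _ => 1) K := X ⟨l, 1⟩ with hx1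
  have hne : (⟨l, 0⟩ : Var k fun _ => 1) ≠ ⟨l, 1⟩ := by
    intro hcon
    have := congrArg (fun v : Var k fun _ => 1 => (v.2 : ℕ)) hcon
    simp at this
  let φ : (V × V) →ₗ[K] MvPolynomial (Var k fun _ => 1) K :=
  { toFun := fun p => x0 * (p.1 : MvPolynomial (Var k fun _ => 1) K) + x1 * (p.2 :
      MvPolynomial (Var k fun _ => 1) K)
    map_add' := by intro p q; simp only [Prod.fst_add, Submodule.coe_add, Prod.snd_add]; ring
    map_smul' := by
      intro r p
      simp only [Prod.smul_fst, Prod.smul_snd, SetLike.val_smul, smul_eq_mul,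
        RingHom.id_apply, MvPolynomial.smul_eq_C_mul]
      ring }
  have hφ : ∀ p : V × V, φ p = x0 * (p.1 : MvPolynomial (Var k fun _ => 1) K)
      + x1 * (p.2 : MvPolynomial (Var k fun _ => 1) K) := fun p => rfl
  have hrange : LinearMap.range φ = mulSpan K l V := by
    apply le_antisymm
    · rintro - ⟨⟨f, g⟩, rfl⟩
      rw [hφ]
      refine Submodule.add_mem _ ?_ ?_
      · exact Submodule.subset_span ⟨0, f, f.2, rfl⟩
      · exact Submodule.subset_span ⟨1, g, g.2, rfl⟩
    · rw [mulSpan]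
      refine Submodule.span_le.mpr ?_
      rintro - ⟨m, f, hf, rfl⟩
      fin_cases m
      · exact ⟨(⟨f, hf⟩, 0), by rw [hφ]; simp; exact Or.inl hx0⟩
      · exact ⟨(0, ⟨f, hf⟩), by rw [hφ]; simp; exact Or.inl hx1⟩
  have hrank := LinearMap.finrank_range_add_finrank_ker φ
  rw [hrange, Module.finrank_prod] at hrank
  have hker : Module.finrank K (LinearMap.ker φ)
      = (if i l = 0 then 0 else Module.finrank K (idealPiece K I (i - e l))) := by
    by_cases hil : i l = 0
    · rw [if_pos hil]
      have hbot : LinearMap.ker φ = ⊥ := by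
        rw [LinearMap.ker_eq_bot']
        rintro ⟨f, g⟩ hfg
        rw [hφ] at hfg
        obtain ⟨h, hf, hg⟩ := split_lemma K hne hfg
        have hf0 : (f : MvPolynomial (Var k fun _ => 1) K) = 0 := by
          by_contra hne0
          have hh0 : h ≠ 0 := by rintro rfl; rw [mul_zero] at hf; exact hne0 hf
          obtain ⟨m, hm⟩ := MvPolynomial.ne_zero_iff.mp hh0
          have hcf : coeff (Finsupp.single (⟨l, 1⟩ : Var k fun _ => 1) 1 + m)
              (f : MvPolynomial (Var k fun _ => 1) K) ≠ 0 := by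
            rw [hf, coeff_X_mul]; exact hm
          have hhom : IsWeightedHomogeneous (wt k fun _ => 1)
              (f : MvPolynomial (Var k fun _ => 1) K) i := f.2.2
          have hw := hhom hcf
          rw [map_add, weight_single_e] at hw
          have := congrFun hw l
          simp only [Pi.add_apply, e, Pi.single_eq_same] at this
          omega
        have hg0 : (g : MvPolynomial (Var k fun _ => 1) K) = 0 := by
          rw [hf0, mul_zero, zero_add] at hfg
          rcases mul_eq_zero.mp hfg with h1 | h1
          · exact absurd h1 (X_ne_zero _)
          · exact h1
        exact Prod.ext (Subtype.ext hf0) (Subtype.ext hg0)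
      rw [hbot, finrank_bot]
    · rw [if_neg hil]
      have hmemV : ∀ h : idealPiece K I (i - e l),
          x1 * (h : MvPolynomial (Var k fun _ => 1) K) ∈ V ∧
          -(x0 * (h : MvPolynomial (Var k fun _ => 1) K)) ∈ V := by
        intro h
        obtain ⟨hmem, hhom⟩ := h.2
        refine ⟨⟨I.mul_mem_left x1 hmem, hom_mul_X 1 hil hhom⟩,
          Submodule.neg_mem _ ⟨I.mul_mem_left x0 hmem, hom_mul_X 0 hil hhom⟩⟩
      let ψ : (idealPiece K I (i - e l)) →ₗ[K] V × V :=
      { toFun := fun h => (⟨x1 * (h : MvPolynomial (Var k fun _ => 1) K), (hmemV h).1⟩,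
          ⟨-(x0 * (h : MvPolynomial (Var k fun _ => 1) K)), (hmemV h).2⟩)
        map_add' := by
          intro p q
          refine Prod.ext (Subtype.ext ?_) (Subtype.ext ?_) <;>
            simp only [Submodule.coe_add, Prod.fst_add, Prod.snd_add] <;> ring
        map_smul' := by
          intro r p
          refine Prod.ext (Subtype.ext ?_) (Subtype.ext ?_) <;>
            simp only [SetLike.val_smul, smul_eq_mul, RingHom.id_apply, Prod.smul_fst,
              Prod.smul_snd, MvPolynomial.smul_eq_C_mul] <;> ring }
      have hψ : ∀ h : idealPiece K I (i - e l),
          ((ψ h).1 : MvPolynomial (Var k fun _ => 1) K)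
            = x1 * (h : MvPolynomial (Var k fun _ => 1) K) ∧
          ((ψ h).2 : MvPolynomial (Var k fun _ => 1) K)
            = -(x0 * (h : MvPolynomial (Var k fun _ => 1) K)) := fun h => ⟨rfl, rfl⟩
      have hinj : Function.Injective ψ := by
        intro a b hab
        have h1 := congrArg (fun p : V × V => (p.1 : MvPolynomial (Var k fun _ => 1) K)) hab
        simp only [(hψ a).1, (hψ b).1] at h1
        exact Subtype.ext (mul_left_cancel₀ (X_ne_zero _) h1)
      have hrangeψ : LinearMap.range ψ = LinearMap.ker φ := by
        apply le_antisymm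
        · rintro - ⟨h, rfl⟩
          rw [LinearMap.mem_ker, hφ, (hψ h).1, (hψ h).2]
          ring
        · rintro ⟨f, g⟩ hfg
          rw [LinearMap.mem_ker, hφ] at hfg
          obtain ⟨h, hf, hg⟩ := split_lemma K hne hfg
          have hhom : IsWeightedHomogeneous (wt k fun _ => 1) h (i - e l) := by
            refine hom_div (j := 1) ?_
            rw [← hx1, ← hf]
            exact f.2.2
          have hmem : h ∈ I := by
            refine mem_ideal_of_X_mul (l := l) hP.1 hhom fun jj => ?_
            fin_cases jj
            · show X (⟨l, 0⟩ : Var k fun _ => 1) * h ∈ I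
              have : X (⟨l, 0⟩ : Var k fun _ => 1) * h
                  = -(g : MvPolynomial (Var k fun _ => 1) K) := by rw [hg]; ring
              rw [this]
              exact Submodule.neg_mem _ g.2.1
            · show X (⟨l, 1⟩ : Var k fun _ => 1) * h ∈ I
              rw [← hx1, ← hf]
              exact f.2.1
          refine ⟨⟨h, hmem, hhom⟩, ?_⟩
          refine Prod.ext (Subtype.ext ?_) (Subtype.ext ?_)
          · rw [(hψ _).1]; exact hf.symm
          · rw [(hψ _).2]; exact hg.symm
      rw [← hrangeψ, LinearMap.finrank_range_of_inj hinj]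
  rw [hker] at hrank
  omega

end MultiProjPoints
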